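/- Let N and M be well-formed labeled portnets and let (M,φ) be a partial mirror of N. Let S = compose({N,M}) with initial marking i_S = i_N + i_M. For any markings m_0, …, m_n, m_0' reachable from i_S, all transitions t_1,…,t_n of N with λ(t_i) = receive, and a transition u of M with λ(u) = send, such that m_0 →t_1 … →t_n m_n and m_0 →u m_0', there are markings m_1', …, m_n' such that m_0' →t_1 … →t_n m_n' and m_n →u m_n'. -/
import Mathlib


namespace PortNets

/-- Direction of communication of a transition: send, receive, or internal (τ). -/
inductive Dir : Type
  | send | receive | tau
deriving DecidableEq

/-- Preset of a node `x` with respect to a flow relation `F`. -/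
def pre {Node : Type} (F : Set (Node × Node)) (x : Node) : Set Node := {y | (y, x) ∈ F}

/-- Postset of a node `x` with respect to a flow relation `F`. -/
def post {Node : Type} (F : Set (Node × Node)) (x : Node) : Set Node := {y | (x, y) ∈ F}

/-- Raw data of an open Petri net (with labels): internal places `P`, input places `I`,
output places `O`, transitions `T`, flow `F`, initial and final places, labeling `μ`. -/
structure OPN (Node L : Type) where
  P : Set Node
  I : Set Node
  O : Set Node
  T : Set Node
  F : Set (Node × Node)
  init : Set Node
  fin : Set Node
  μ : Node → L

variable {Node L : Type}

/-- All places of an OPN. -/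
def OPN.places (N : OPN Node L) : Set Node := N.P ∪ N.I ∪ N.O

/-- All nodes of an OPN. -/
def OPN.nodes (N : OPN Node L) : Set Node := N.places ∪ N.T

/-- Structural requirements of an open Petri net. -/
structure IsOPN (N : OPN Node L) : Prop where
  disjPI : N.P ∩ N.I = ∅
  disjPO : N.P ∩ N.O = ∅
  disjIO : N.I ∩ N.O = ∅
  disjPT : N.places ∩ N.T = ∅
  flow_sub : N.F ⊆ (N.places ×ˢ N.T) ∪ (N.T ×ˢ N.places)
  no_pre_I : ∀ x ∈ N.I, pre N.F x = ∅
  no_post_O : ∀ x ∈ N.O, post N.F x = ∅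
  not_both : ∀ t ∈ N.T, ¬((pre N.F t ∩ N.I).Nonempty ∧ (post N.F t ∩ N.O).Nonempty)
  init_sub : N.init ⊆ N.P
  fin_sub : N.fin ⊆ N.P

open Classical in
noncomputable def dir (N : OPN Node L) (t : Node) : Dir :=
  if (post N.F t ∩ N.O).Nonempty then Dir.send
  else if (pre N.F t ∩ N.I).Nonempty then Dir.receive
  else Dir.tau

open Classical in
noncomputable def fireAt (F : Set (Node × Node)) (m : Node → ℕ) (t : Node) : Node → ℕ :=
  fun p => m p - (if (p, t) ∈ F then 1 else 0) + (if (t, p) ∈ F then 1 else 0)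

/-- `Fires T F m t m'`: transition `t` is enabled in marking `m` and firing it yields `m'`. -/
def Fires (T : Set Node) (F : Set (Node × Node)) (m : Node → ℕ) (t : Node)
    (m' : Node → ℕ) : Prop :=
  t ∈ T ∧ (∀ p, (p, t) ∈ F → 1 ≤ m p) ∧ m' = fireAt F m t

/-- Firing a finite sequence of transitions. -/
inductive FireSeq (T : Set Node) (F : Set (Node × Node)) :
    (Node → ℕ) → List Node → (Node → ℕ) → Prop
  | nil (m : Node → ℕ) : FireSeq T F m [] m
  | cons {m m' m'' : Node → ℕ} {t : Node} {σ : List Node} :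
      Fires T F m t m' → FireSeq T F m' σ m'' → FireSeq T F m (t :: σ) m''

/-- Reachability of markings. -/
def Reach (T : Set Node) (F : Set (Node × Node)) (m m' : Node → ℕ) : Prop :=
  ∃ σ : List Node, FireSeq T F m σ m'

/-- Weak termination: from every marking reachable from `m0`, the marking `mf` is reachable. -/
def WeaklyTerminates (T : Set Node) (F : Set (Node × Node)) (m0 mf : Node → ℕ) : Prop :=
  ∀ m, Reach T F m0 m → Reach T F m mf

/-- The marking putting one token on each element of a set of places. -/
noncomputable def mark (s : Set Node) : Node → ℕ := s.indicator fun _ => 1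

/-- Flow relation of the skeleton: all arcs not adjacent to interface places. -/
def skF (N : OPN Node L) : Set (Node × Node) :=
  {x ∈ N.F | x.1 ∉ N.I ∪ N.O ∧ x.2 ∉ N.I ∪ N.O}

/-- The skeleton is a state machine: each transition has at most one place in its
preset and at most one in its postset. -/
def IsSM (N : OPN Node L) : Prop :=
  ∀ t ∈ N.T, (pre (skF N) t).Subsingleton ∧ (post (skF N) t).Subsingleton

/-- `x` lies on a path from `i` to `f` w.r.t. flow `F`. -/
def OnPath (F : Set (Node × Node)) (i f x : Node) : Prop :=
  ∃ l : List Node, l ≠ [] ∧ List.Chain' (fun a b => (a, b) ∈ F) l ∧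
    l.head? = some i ∧ l.getLast? = some f ∧ x ∈ l

/-- Workflow net (with places `P`, transitions `T`, flow `F`): `i` is the unique place with
empty preset, `f` the unique place with empty postset, and every node is on a path
from `i` to `f`. -/
def IsWFNOn (P T : Set Node) (F : Set (Node × Node)) (i f : Node) : Prop :=
  i ∈ P ∧ f ∈ P ∧ pre F i = ∅ ∧ post F f = ∅ ∧
    (∀ p ∈ P, pre F p = ∅ → p = i) ∧
    (∀ p ∈ P, post F p = ∅ → p = f) ∧
    (∀ x ∈ P ∪ T, OnPath F i f x)

/-- Transition `t` is connected (by an arc, in either direction) to node `x`. -/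
def connected (N : OPN Node L) (t x : Node) : Prop := (x, t) ∈ N.F ∨ (t, x) ∈ N.F

/-- A labeled portnet: an OPN whose skeleton is a state-machine workflow net, with
singleton `init` and `fin`, every transition connected to exactly one interface place,
transitions sharing an interface place sharing a label, and transitions sharing a
label sharing their interface place connections. -/
structure IsPortnet (N : OPN Node L) : Prop where
  isOPN : IsOPN N
  isSM : IsSM N
  init_single : ∃ i, N.init = {i}
  fin_single : ∃ f, N.fin = {f}
  isWFN : ∀ i f, N.init = {i} → N.fin = {f} → IsWFNOn N.P N.T (skF N) i f
  one_iface : ∀ t ∈ N.T, ∃! x, x ∈ N.I ∪ N.O ∧ connected N t x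
  same_iface_label : ∀ x ∈ N.I ∪ N.O, ∀ t t', t ∈ N.T → t' ∈ N.T →
    connected N t x → connected N t' x → N.μ t = N.μ t'
  same_label_iface : ∀ t ∈ N.T, ∀ t' ∈ N.T, N.μ t = N.μ t' →
    ∀ x ∈ N.I ∪ N.O, (connected N t x ↔ connected N t' x)

/-- Observable choices: distinct transitions in the postset of a place have distinct labels. -/
def ObservableChoices (N : OPN Node L) : Prop :=
  ∀ p ∈ N.P, ∀ t ∈ post N.F p, ∀ t' ∈ post N.F p, t ≠ t' → N.μ t ≠ N.μ t'

/-- Choice property: all transitions in the postset of a place have the same direction. -/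
def ChoiceProp (N : OPN Node L) : Prop :=
  ∀ p ∈ N.P, ∀ t ∈ post N.F p, ∀ t' ∈ post N.F p, dir N t = dir N t'

/-- Diamond property. -/
def DiamondProp (N : OPN Node L) : Prop :=
  ∀ p ∈ N.P, ∀ t ∈ post N.F p, ∀ t' ∈ post N.F p, dir N t ≠ dir N t' →
    ∀ q ∈ post (skF N) t, ∀ q' ∈ post (skF N) t',
      ∃ u ∈ post (skF N) q, ∃ u' ∈ post (skF N) q',
        (post (skF N) u ∩ post (skF N) u').Nonempty ∧
        N.μ t = N.μ u' ∧ N.μ t' = N.μ u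

/-- Loop property. -/
def LoopProp (N : OPN Node L) : Prop :=
  ∀ p ∈ N.P, ∀ t ∈ post N.F p, ∀ t' ∈ post N.F p, t ≠ t' → dir N t = dir N t' →
    ∀ (l : List Node) (t'' : Node),
      List.Chain' (fun a b => (a, b) ∈ N.F) (p :: t :: (l ++ [t''])) →
      t'' ∈ N.T → N.μ t'' = N.μ t' →
      (∀ u ∈ l, u ∈ N.T → N.μ u ≠ N.μ t') →
      ∃ v ∈ t :: (l ++ [t'']), v ∈ N.T ∧ dir N v ≠ dir N t

/-- Well-formed labeled portnet. -/
def WellFormed (N : OPN Node L) : Prop :=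
  IsPortnet N ∧ ObservableChoices N ∧ DiamondProp N ∧ LoopProp N

/-- `(M, φ)` is a partial mirror of the labeled portnet `N`. -/
structure IsPartialMirror (N M : OPN Node L) (φ : Node → Node) : Prop where
  portN : IsPortnet N
  portM : IsPortnet M
  inj : Set.InjOn φ M.nodes
  mapsP : ∀ x ∈ M.P, φ x ∈ N.P
  mapsT : ∀ x ∈ M.T, φ x ∈ N.T
  mapsI : ∀ x ∈ M.I, φ x ∈ N.O
  mapsO : ∀ x ∈ M.O, φ x ∈ N.I
  flow_same : ∀ x y, (x, y) ∈ M.F → x ∉ M.I → y ∉ M.O → (φ x, φ y) ∈ N.F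
  flow_rev : ∀ x y, (x, y) ∈ M.F → (x ∈ M.I ∨ y ∈ M.O) → (φ y, φ x) ∈ N.F
  init_eq : φ '' M.init = N.init
  fin_eq : φ '' M.fin = N.fin
  lab : ∀ t ∈ M.T, M.μ t = N.μ (φ t)
  send_cover : ∀ p ∈ M.P, ∀ t, (φ p, t) ∈ N.F → dir N t = Dir.send →
    ∃ t', (p, t') ∈ M.F ∧ φ t' = t

/-- Composability of two OPNs. -/
def Composable (N M : OPN Node L) : Prop :=
  (N.nodes ∩ M.nodes = (N.I ∪ N.O) ∩ (M.I ∪ M.O)) ∧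
  (((N.I ∩ M.O) ∪ (M.I ∩ N.O)).Nonempty →
    N.O ⊆ M.I ∧ M.O ⊆ N.I ∧ N.I ∩ M.I = ∅ ∧ N.O ∩ M.O = ∅)

open Classical in
noncomputable def compose2 (N M : OPN Node L) : OPN Node L where
  P := N.P ∪ M.P ∪ ((N.I ∪ M.I) ∩ (N.O ∪ M.O))
  I := (N.I ∪ M.I) \ (N.O ∪ M.O)
  O := (N.O ∪ M.O) \ (N.I ∪ M.I)
  T := N.T ∪ M.T
  F := N.F ∪ M.F
  init := N.init ∪ M.init
  fin := N.fin ∪ M.fin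
  μ := fun x => if x ∈ N.T then N.μ x else M.μ x

end PortNets

namespace PortNets

/-- Single-step swap: two enabled transitions with disjoint presets commute. -/
lemma swap_step {Node : Type} {T : Set Node} {F : Set (Node × Node)}
    {m m1 m2 : Node → ℕ} {t u : Node}
    (hd : ∀ p, (p, t) ∈ F → (p, u) ∈ F → False)
    (ht : Fires T F m t m1) (hu : Fires T F m u m2) :
    ∃ m3, Fires T F m2 t m3 ∧ Fires T F m1 u m3 := by
  obtain ⟨htT, htE, rfl⟩ := ht
  obtain ⟨huT, huE, rfl⟩ := hu
  refine ⟨fireAt F (fireAt F m u) t, ⟨htT, ?_, rfl⟩, huT, ?_, ?_⟩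
  · intro p hp
    have h1 := htE p hp
    have h2 : (p, u) ∉ F := fun h => hd p hp h
    simp only [fireAt, if_neg h2]
    omega
  · intro p hp
    have h1 := huE p hp
    have h2 : (p, t) ∉ F := fun h => hd p h hp
    simp only [fireAt, if_neg h2]
    omega
  · funext p
    have h1 : (p, t) ∈ F → 1 ≤ m p := htE p
    have h2 : (p, u) ∈ F → 1 ≤ m p := huE p
    have h3 := hd p
    simp only [fireAt]
    by_cases hpt : (p, t) ∈ F <;> by_cases hpu : (p, u) ∈ F <;>
      by_cases htp : (t, p) ∈ F <;> by_cases hup : (u, p) ∈ F <;>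
      simp_all <;> omega

/-- Sequence swap: a transition with preset disjoint from all presets of a fired
sequence commutes with the whole sequence. -/
lemma swap_seq {Node : Type} {T : Set Node} {F : Set (Node × Node)}
    {m0 mn m0' : Node → ℕ} {ts : List Node} {u : Node}
    (hd : ∀ t ∈ ts, ∀ p, (p, t) ∈ F → (p, u) ∈ F → False)
    (h1 : FireSeq T F m0 ts mn) (h2 : Fires T F m0 u m0') :
    ∃ mn', FireSeq T F m0' ts mn' ∧ Fires T F mn u mn' := by
  induction ts generalizing m0 m0' with
  | nil =>
    cases h1
    exact ⟨m0', FireSeq.nil _, h2⟩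
  | cons t σ ih =>
    cases h1 with
    | cons hf hs =>
      obtain ⟨m3, h3, h4⟩ := swap_step (hd t (by simp)) hf h2
      obtain ⟨mn', h5, h6⟩ := ih (fun x hx => hd x (by simp [hx])) hs h4
      exact ⟨mn', FireSeq.cons h3 h5, h6⟩

/-- in the composition of a well-formed labeled portnet `N` and its
well-formed partial mirror `(M, φ)`, an enabled send transition `u` of `M` is not
disabled by firing a sequence of receive transitions of `N`; the send may equivalently
happen before or after, reaching the same marking. -/
theorem swap_send_receive {Node L : Type} (N M : OPN Node L) (φ : Node → Node)
    (hN : WellFormed N) (hM : WellFormed M)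
    (hmir : IsPartialMirror N M φ) (hcomp : Composable N M)
    (m0 mn m0' : Node → ℕ) (ts : List Node) (u : Node)
    (hreach : Reach (compose2 N M).T (compose2 N M).F (mark N.init + mark M.init) m0)
    (hts : ∀ x ∈ ts, x ∈ N.T ∧ dir N x = Dir.receive)
    (hu : u ∈ M.T) (husend : dir M u = Dir.send)
    (h1 : FireSeq (compose2 N M).T (compose2 N M).F m0 ts mn)
    (h2 : Fires (compose2 N M).T (compose2 N M).F m0 u m0') :
    ∃ mn' : Node → ℕ,
      FireSeq (compose2 N M).T (compose2 N M).F m0' ts mn' ∧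
      Fires (compose2 N M).T (compose2 N M).F mn u mn' := by
  classical
  obtain ⟨hNport, _⟩ := hN
  obtain ⟨hMport, _⟩ := hM
  have hNopn := hNport.isOPN
  have hMopn := hMport.isOPN
  -- u is not a node of N
  have huN : u ∉ N.nodes := by
    intro h
    have hsh : u ∈ (N.I ∪ N.O) ∩ (M.I ∪ M.O) := by
      rw [← hcomp.1]
      exact ⟨h, Or.inr hu⟩
    have huPl : u ∈ M.places := by
      rcases hsh.2 with h | h
      · exact Or.inl (Or.inr h)
      · exact Or.inr h
    have : u ∈ M.places ∩ M.T := ⟨huPl, hu⟩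
    rw [hMopn.disjPT] at this
    exact this
  -- the send direction of u gives (post M.F u ∩ M.O).Nonempty
  have husend' : (post M.F u ∩ M.O).Nonempty := by
    by_contra h
    simp only [dir, if_neg h] at husend
    split at husend <;> simp_all
  have hpreu : ∀ p, (p, u) ∈ M.F → p ∈ M.P := by
    intro p hp
    have hpl : p ∈ M.places := by
      rcases hMopn.flow_sub hp with h | h
      · exact h.1
      · exfalso
        have : u ∈ M.places ∩ M.T := ⟨h.2, hu⟩
        rw [hMopn.disjPT] at this
        exact this
    simp only [OPN.places, Set.mem_union] at hpl
    rcases hpl with (hpl | hpl) | hpl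
    · exact hpl
    · -- p ∈ M.I : contradicts u being a send (not_both)
      exfalso
      exact hMopn.not_both u hu ⟨⟨p, hp, hpl⟩, husend'⟩
    · -- p ∈ M.O has empty postset
      exfalso
      have := hMopn.no_post_O p hpl
      have : u ∈ post M.F p := hp
      simp_all
  -- disjointness of presets
  have hd : ∀ t ∈ ts, ∀ p, (p, t) ∈ (compose2 N M).F → (p, u) ∈ (compose2 N M).F → False := by
    intro t htmem p hpt hpu
    obtain ⟨htN, -⟩ := hts t htmem
    -- t is not a node of M
    have htM : t ∉ M.nodes := by
      intro h
      have hsh : t ∈ (N.I ∪ N.O) ∩ (M.I ∪ M.O) := by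
        rw [← hcomp.1]
        exact ⟨Or.inr htN, h⟩
      have htpl : t ∈ N.places := by
        rcases hsh.1 with h | h
        · exact Or.inl (Or.inr h)
        · exact Or.inr h
      have : t ∈ N.places ∩ N.T := ⟨htpl, htN⟩
      rw [hNopn.disjPT] at this
      exact this
    -- arcs into t are N-arcs, arcs into u are M-arcs
    have hptN : (p, t) ∈ N.F := by
      rcases hpt with h | h
      · exact h
      · exfalso
        rcases hMopn.flow_sub h with h' | h'
        · exact htM (Or.inr h'.2)
        · exact htM (Or.inl h'.2)
    have hpuM : (p, u) ∈ M.F := by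
      rcases hpu with h | h
      · exfalso
        rcases hNopn.flow_sub h with h' | h'
        · exact huN (Or.inr h'.2)
        · exact huN (Or.inl h'.2)
      · exact h
    -- p is a place of N
    have hpN : p ∈ N.places := by
      rcases hNopn.flow_sub hptN with h | h
      · exact h.1
      · exfalso
        have : t ∈ N.places ∩ N.T := ⟨h.2, htN⟩
        rw [hNopn.disjPT] at this
        exact this
    -- p ∈ M.P, hence p is shared, hence p ∈ M.I ∪ M.O, contradicting M.P disjointness
    have hpMP : p ∈ M.P := hpreu p hpuM
    have hsh : p ∈ (N.I ∪ N.O) ∩ (M.I ∪ M.O) := by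
      rw [← hcomp.1]
      exact ⟨Or.inl hpN, Or.inl (Or.inl (Or.inl hpMP))⟩
    rcases hsh.2 with h | h
    · have : p ∈ M.P ∩ M.I := ⟨hpMP, h⟩
      rw [hMopn.disjPI] at this
      exact this
    · have : p ∈ M.P ∩ M.O := ⟨hpMP, h⟩
      rw [hMopn.disjPO] at this
      exact this
  exact swap_seq hd h1 h2

end PortNets
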